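/- Consider call-option data: strikes 0 < K_1 < ... < K_N with asks A_n, bids B_n, bond price D, and suppose the call market is arbitrage-free. Then for any 0 < i < j < k ≤ N, the line f_{i,k} through (K_i, A_i) and (K_k, A_k) satisfies f_{i,k}(K_j) > B_j. -/

import Mathlib

/-- The affine line through `(K i, A i)` and `(K j, A j)`. -/
noncomputable def line (K A : ℕ → ℝ) (i j : ℕ) (x : ℝ) : ℝ :=
  (A j - A i) / (K j - K i) * (x - K i) + A i

/-- Initial cost of a static portfolio of `β` zero-coupon bonds (price `D`) and
`π n` call options (asks for longs, bids for shorts). -/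
noncomputable def callCost (N : ℕ) (A B : ℕ → ℝ) (D β : ℝ) (π : ℕ → ℝ) : ℝ :=
  (max β 0 * D - max (-β) 0 * D) +
    ∑ n ∈ Finset.Icc 1 N, (max (π n) 0 * A n - max (-π n) 0 * B n)

/-- Terminal payoff of the call portfolio in state `ω`. -/
noncomputable def callValue (N : ℕ) (K : ℕ → ℝ) (β : ℝ) (π : ℕ → ℝ) (ω : ℝ) : ℝ :=
  β + ∑ n ∈ Finset.Icc 1 N, π n * max (ω - K n) 0

/-- The call-option market `(K n, A n, B n)_{1 ≤ n ≤ N}` is arbitrage-free. -/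
def CallArbitrageFree (N : ℕ) (K A B : ℕ → ℝ) (D : ℝ) : Prop :=
  ¬ ∃ (β : ℝ) (π : ℕ → ℝ),
      (∀ ω : ℝ, 0 ≤ ω → 0 ≤ callValue N K β π ω - callCost N A B D β π / D) ∧
      (∃ ω : ℝ, 0 ≤ ω ∧ 0 < callValue N K β π ω - callCost N A B D β π / D)

lemma tri_sum {N i j k : ℕ} (hi : 1 ≤ i) (hij : i < j) (hjk : j < k) (hkN : k ≤ N)
    (g : ℕ → ℝ) (hg : ∀ n, n ≠ i → n ≠ j → n ≠ k → g n = 0) :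
    ∑ n ∈ Finset.Icc 1 N, g n = g i + g j + g k := by
  have hij' : i ≠ j := hij.ne
  have hik : i ≠ k := (hij.trans hjk).ne
  have hjk' : j ≠ k := hjk.ne
  have hsub : ({i, j, k} : Finset ℕ) ⊆ Finset.Icc 1 N := by
    intro x hx
    simp only [Finset.mem_insert, Finset.mem_singleton] at hx
    rcases hx with rfl | rfl | rfl <;> rw [Finset.mem_Icc] <;> omega
  rw [← Finset.sum_subset hsub]
  · rw [Finset.sum_insert (by simp [hij', hik]), Finset.sum_insert (by simp [hjk']),
      Finset.sum_singleton]
    ring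
  · intro x _ hx
    simp only [Finset.mem_insert, Finset.mem_singleton, not_or] at hx
    exact hg x hx.1 hx.2.1 hx.2.2

/-- Butterfly lemma for calls: in an arbitrage-free call market, for
`0 < i < j < k ≤ N` the line through `(K i, A i)` and `(K k, A k)` lies strictly
above the bid at `K j`. -/
theorem stmt_17 (N : ℕ) (K A B : ℕ → ℝ) (D : ℝ) (hD : 0 < D)
    (hKpos : 0 < K 1)
    (hKmono : ∀ m n : ℕ, m < n → n ≤ N → K m < K n)
    (hBA : ∀ n : ℕ, 1 ≤ n → n ≤ N → B n ≤ A n)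
    (hAF : CallArbitrageFree N K A B D)
    (i j k : ℕ) (hi : 0 < i) (hij : i < j) (hjk : j < k) (hkN : k ≤ N) :
    B j < line K A i k (K j) := by
  by_contra hcon
  push_neg at hcon
  set a := K i with ha
  set b := K j with hb
  set c := K k with hc
  have hab : a < b := hKmono i j hij (by omega)
  have hbc : b < c := hKmono j k hjk hkN
  have hac : a < c := hab.trans hbc
  set l : ℝ := (c - b) / (c - a) with hl
  have hca : (0:ℝ) < c - a := by linarith
  have hl0 : 0 < l := div_pos (by linarith) hca
  have hl1 : l < 1 := by
    rw [hl, div_lt_one hca]; linarith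
  have hlb : l * a + (1 - l) * c = b := by
    have h' : l * (c - a) = c - b := by rw [hl]; exact div_mul_cancel₀ _ hca.ne'
    linear_combination -h'
  -- the portfolio
  set π : ℕ → ℝ := fun n => if n = i then l else if n = j then -1 else if n = k then 1 - l else 0
    with hπ
  have hπi : π i = l := by simp [hπ]
  have hπj : π j = -1 := by simp [hπ, hij.ne']
  have hπk : π k = 1 - l := by simp [hπ, (hij.trans hjk).ne', hjk.ne']
  have hij' : i ≠ j := hij.ne
  have hik : i ≠ k := (hij.trans hjk).ne
  have hjk' : j ≠ k := hjk.ne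
  -- cost
  have hline : line K A i k b = l * A i + (1 - l) * A k := by
    rw [line, hl, ← ha, ← hc]
    field_simp
    ring
  have hcost : callCost N A B D 0 π = l * A i + (1 - l) * A k - B j := by
    rw [callCost]
    have := tri_sum (N := N) (i := i) (j := j) (k := k) hi hij hjk hkN
      (fun n => max (π n) 0 * A n - max (-π n) 0 * B n)
      (by intro n h1 h2 h3; simp [hπ, h1, h2, h3])
    rw [this]
    rw [hπi, hπj, hπk]
    rw [max_eq_left hl0.le, max_eq_right (by linarith : -l ≤ 0),
      max_eq_right (by norm_num : (-1:ℝ) ≤ 0), max_eq_left (by linarith : (0:ℝ) ≤ 1 - l),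
      max_eq_right (by linarith : -(1 - l) ≤ 0)]
    simp
    ring
  have hcost' : callCost N A B D 0 π ≤ 0 := by
    rw [hcost, ← hline]
    linarith
  -- value
  have hval : ∀ ω : ℝ, callValue N K 0 π ω =
      l * max (ω - a) 0 + (-1) * max (ω - b) 0 + (1 - l) * max (ω - c) 0 := by
    intro ω
    rw [callValue]
    have := tri_sum (N := N) (i := i) (j := j) (k := k) hi hij hjk hkN
      (fun n => π n * max (ω - K n) 0)
      (by intro n h1 h2 h3; simp [hπ, h1, h2, h3])
    rw [this]
    rw [hπi, hπj, hπk]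
    ring
  have hval_nonneg : ∀ ω : ℝ, 0 ≤ callValue N K 0 π ω := by
    intro ω
    rw [hval]
    have h1 : ω - b ≤ l * max (ω - a) 0 + (1 - l) * max (ω - c) 0 := by
      have : ω - b = l * (ω - a) + (1 - l) * (ω - c) := by
        rw [← hlb]; ring
      rw [this]
      have := le_max_left (ω - a) 0
      have := le_max_left (ω - c) 0
      nlinarith
    have h2 : (0:ℝ) ≤ l * max (ω - a) 0 + (1 - l) * max (ω - c) 0 := by
      have := le_max_right (ω - a) 0
      have := le_max_right (ω - c) 0
      nlinarith
    have := max_le h1 h2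
    linarith
  apply hAF
  have hbpos : 0 < b := lt_trans hKpos (hKmono 1 j (by omega) (by omega))
  refine ⟨0, π, fun ω _ => ?_, b, hbpos.le, ?_⟩
  · have := hval_nonneg ω
    have : callCost N A B D 0 π / D ≤ 0 := div_nonpos_of_nonpos_of_nonneg hcost' hD.le
    linarith [hval_nonneg ω]
  · have hvb : 0 < callValue N K 0 π b := by
      rw [hval]
      rw [max_eq_left (by linarith : (0:ℝ) ≤ b - a), max_eq_right (by linarith : b - b ≤ 0),
        max_eq_right (by linarith : b - c ≤ 0)]
      nlinarith
    have : callCost N A B D 0 π / D ≤ 0 := div_nonpos_of_nonpos_of_nonneg hcost' hD.le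
    linarith
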